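/- Let H₁, H₂ be real Hilbert spaces and B : H₁ × H₂ → ℝ a bounded bilinear form with |B(x,y)| ≤ M‖x‖‖y‖. Suppose there is β > 0 such that for every x ∈ H₁ with ‖x‖ = 1 there exists y ∈ H₂ with ‖y‖ ≤ 1 and B(x,y) ≥ β, and suppose that for every nonzero y ∈ H₂, sup_{x ∈ H₁} B(x,y) = +∞. Then for every bounded linear functional ℓ on H₂ there exists a unique x ∈ H₁ with B(x, y) = ℓ(y) for all y ∈ H₂, and ‖x‖ ≤ ‖ℓ‖/β. -/

import Mathlib

open InnerProductSpace

/-- Babuška's theorem for a bounded bilinear form `B` on a pair of real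
Hilbert spaces satisfying the inf-sup condition (constant `β > 0`) and the infinity
condition: every bounded linear functional `ℓ` on `H₂` is represented by a unique
`x ∈ H₁` via `B(x, ·) = ℓ`, with `‖x‖ ≤ ‖ℓ‖ / β`. -/
theorem stmt13 {H₁ H₂ : Type*}
    [NormedAddCommGroup H₁] [InnerProductSpace ℝ H₁] [CompleteSpace H₁]
    [NormedAddCommGroup H₂] [InnerProductSpace ℝ H₂] [CompleteSpace H₂]
    (B : H₁ →ₗ[ℝ] H₂ →ₗ[ℝ] ℝ) (M : ℝ)
    (hM : ∀ x y, |B x y| ≤ M * ‖x‖ * ‖y‖)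
    (β : ℝ) (hβ : 0 < β)
    (hinf : ∀ x : H₁, ‖x‖ = 1 → ∃ y : H₂, ‖y‖ ≤ 1 ∧ β ≤ B x y)
    (hsur : ∀ y : H₂, y ≠ 0 → ∀ C : ℝ, ∃ x : H₁, C < B x y)
    (ℓ : H₂ →L[ℝ] ℝ) :
    ∃ x : H₁, (∀ y, B x y = ℓ y) ∧ ‖x‖ ≤ ‖ℓ‖ / β ∧
      ∀ x' : H₁, (∀ y, B x' y = ℓ y) → x' = x := by
  -- B x is continuous for each x
  have hM' : ∀ x y, |B x y| ≤ |M| * ‖x‖ * ‖y‖ := fun x y =>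
    (hM x y).trans (mul_le_mul_of_nonneg_right
      (mul_le_mul_of_nonneg_right (le_abs_self M) (norm_nonneg x)) (norm_nonneg y))
  let Bc : H₁ → (H₂ →L[ℝ] ℝ) := fun x =>
    LinearMap.mkContinuous (B x) (|M| * ‖x‖) (fun y => by
      rw [Real.norm_eq_abs]; simpa [mul_assoc] using hM' x y)
  -- Define A : H₁ →L[ℝ] H₂ via Riesz representation
  let Alin : H₁ →ₗ[ℝ] H₂ :=
    { toFun := fun x => (toDual ℝ H₂).symm (Bc x)
      map_add' := fun a b => by
        apply ext_inner_right ℝ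
        intro y
        simp only [inner_add_left, toDual_symm_apply]
        simp [Bc, map_add]
      map_smul' := fun c a => by
        apply ext_inner_right ℝ
        intro y
        simp only [RingHom.id_apply, real_inner_smul_left, toDual_symm_apply]
        simp [Bc] }
  have hA : ∀ x y, ⟪Alin x, y⟫_ℝ = B x y := fun x y => by
    show ⟪(toDual ℝ H₂).symm (Bc x), y⟫_ℝ = B x y
    rw [toDual_symm_apply]; rfl
  have hAnorm : ∀ x, ‖Alin x‖ ≤ |M| * ‖x‖ := fun x => by
    have : ‖Alin x‖ = ‖Bc x‖ := by
      simp [Alin]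
    rw [this]
    exact LinearMap.mkContinuous_norm_le _ (by positivity) _
  let A : H₁ →L[ℝ] H₂ := Alin.mkContinuous |M| (by simpa [mul_assoc] using hAnorm)
  have hAc : ∀ x y, ⟪A x, y⟫_ℝ = B x y := hA
  -- lower bound: β ‖x‖ ≤ ‖A x‖
  have hlow : ∀ x : H₁, β * ‖x‖ ≤ ‖A x‖ := by
    intro x
    rcases eq_or_ne x 0 with rfl | hx
    · simp
    · have hxn : ‖x‖ ≠ 0 := norm_ne_zero_iff.mpr hx
      obtain ⟨y, hy1, hy2⟩ := hinf (‖x‖⁻¹ • x) (by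
        simp [norm_smul, abs_of_nonneg (inv_nonneg.mpr (norm_nonneg x)), inv_mul_cancel₀ hxn])
      have hBxy : β * ‖x‖ ≤ B x y := by
        have := hy2
        simp only [map_smul, LinearMap.smul_apply, smul_eq_mul] at this
        have h2 : β * ‖x‖ ≤ (‖x‖⁻¹ * B x y) * ‖x‖ := by
          nlinarith [norm_nonneg x]
        calc β * ‖x‖ ≤ (‖x‖⁻¹ * B x y) * ‖x‖ := h2
          _ = B x y := by field_simp
      have hin : B x y = ⟪A x, y⟫_ℝ := (hAc x y).symm
      have : ⟪A x, y⟫_ℝ ≤ ‖A x‖ * ‖y‖ := real_inner_le_norm _ _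
      have hy0 : ‖A x‖ * ‖y‖ ≤ ‖A x‖ * 1 := by
        exact mul_le_mul_of_nonneg_left hy1 (norm_nonneg _)
      linarith [hBxy.trans_eq hin]
  -- A is antilipschitz, hence closed range
  have hanti : AntilipschitzWith (⟨β⁻¹, by positivity⟩ : NNReal) A := by
    apply ContinuousLinearMap.antilipschitz_of_bound
    intro x
    show ‖x‖ ≤ β⁻¹ * ‖A x‖
    calc ‖x‖ ≤ β⁻¹ * (β * ‖x‖) := by field_simp; exact le_refl _
      _ ≤ β⁻¹ * ‖A x‖ := by
          exact mul_le_mul_of_nonneg_left (hlow x) (by positivity)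
  have hclosed : IsClosed (Set.range A) :=
    hanti.isClosed_range A.uniformContinuous
  -- range is all of H₂
  let S : Submodule ℝ H₂ := LinearMap.range (A : H₁ →ₗ[ℝ] H₂)
  have hSclosed : IsClosed (S : Set H₂) := by
    have : (S : Set H₂) = Set.range A := by
      ext z; simp [S, LinearMap.mem_range]
    rw [this]; exact hclosed
  haveI : CompleteSpace S := hSclosed.completeSpace_coe
  have hSbot : Sᗮ = ⊥ := by
    rw [Submodule.eq_bot_iff]
    intro y hy
    by_contra hy0
    obtain ⟨x, hx⟩ := hsur y hy0 0
    have : ⟪A x, y⟫_ℝ = 0 := hy (A x) ⟨x, rfl⟩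
    rw [hAc] at this
    linarith
  have hStop : S = ⊤ := Submodule.orthogonal_eq_bot_iff.mp hSbot
  -- solve A x = z where z represents ℓ
  set z := (toDual ℝ H₂).symm ℓ with hz
  have hzmem : z ∈ S := hStop ▸ Submodule.mem_top
  obtain ⟨x, hx⟩ := hzmem
  have hxall : ∀ y, B x y = ℓ y := by
    intro y
    rw [← hAc x y]
    have : (A x : H₂) = z := hx
    rw [this, hz]
    exact toDual_symm_apply
  have hnorm : ‖x‖ ≤ ‖ℓ‖ / β := by
    have h1 : β * ‖x‖ ≤ ‖A x‖ := hlow x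
    have h2 : ‖(A x : H₂)‖ = ‖ℓ‖ := by
      rw [show (A x : H₂) = z from hx, hz]
      exact LinearIsometryEquiv.norm_map _ _
    rw [le_div_iff₀ hβ, mul_comm]
    rw [h2] at h1; exact h1
  refine ⟨x, hxall, hnorm, ?_⟩
  intro x' hx'
  have hdiff : ∀ y, B (x' - x) y = 0 := fun y => by
    simp [map_sub, hx' y, hxall y]
  have : A (x' - x) = 0 := by
    apply ext_inner_right ℝ
    intro y
    rw [hAc, hdiff y, inner_zero_left]
  have h0 : β * ‖x' - x‖ ≤ 0 := by
    have := hlow (x' - x)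
    rw [‹A (x' - x) = 0›] at this
    simpa using this
  have : ‖x' - x‖ = 0 := le_antisymm (by nlinarith) (norm_nonneg _)
  exact sub_eq_zero.mp (norm_eq_zero.mp this)
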